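/- For every n ≥ 3, the directed n-cycle (vertices v_1, …, v_n with arcs v_i → v_{i+1} indices mod n) is (2,3)-cordial: there exists a labeling f : V → {0,1} with ||f⁻¹(0)| − |f⁻¹(1)|| ≤ 1 such that the induced arc labeling g(u,v) = f(v) − f(u) satisfies ||g⁻¹(i)| − |g⁻¹(j)|| ≤ 1 for all i, j ∈ {−1,0,1}. -/

import Mathlib

open Finset

/-- A (0,1)-vertex labeling is friendly if the counts of 0s and 1s differ by at most 1. -/
def vertexFriendly {V : Type*} [Fintype V] (f : V → ℤ) : Prop :=
  |((univ.filter (fun v => f v = 0)).card : ℤ) - ((univ.filter (fun v => f v = 1)).card : ℤ)| ≤ 1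

/-- Number of arcs of `A` receiving induced label `i` under `g (u,v) = f v - f u`. -/
def arcCount {V : Type*} [DecidableEq V] (A : Finset (V × V)) (f : V → ℤ) (i : ℤ) : ℕ :=
  (A.filter (fun p => f p.2 - f p.1 = i)).card

/-- The induced arc labeling is friendly: counts of labels -1, 0, 1 pairwise differ by ≤ 1. -/
def arcFriendly {V : Type*} [DecidableEq V] (A : Finset (V × V)) (f : V → ℤ) : Prop :=
  ∀ i ∈ ({-1, 0, 1} : Set ℤ), ∀ j ∈ ({-1, 0, 1} : Set ℤ),
    |(arcCount A f i : ℤ) - (arcCount A f j : ℤ)| ≤ 1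

/-- A digraph (given by its arc set) is (2,3)-cordial. -/
def cordial23 {V : Type*} [Fintype V] [DecidableEq V] (A : Finset (V × V)) : Prop :=
  ∃ f : V → ℤ, (∀ v, f v = 0 ∨ f v = 1) ∧ vertexFriendly f ∧ arcFriendly A f

/-- The arcs of the directed n-cycle on vertices Fin n: i → i+1 (mod n). -/
def cycleArcs (n : ℕ) : Finset (Fin n × Fin n) :=
  univ.filter (fun p => p.2.val = (p.1.val + 1) % n)


/-- Periodic pattern 1,1,0,1,0,0 -/
def pat (j : ℕ) : ℤ := if j % 6 = 0 ∨ j % 6 = 1 ∨ j % 6 = 3 then 1 else 0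

lemma pat_mod (j : ℕ) : pat j = pat (j % 6) := by
  have h : j % 6 % 6 = j % 6 := by omega
  simp only [pat, h]

lemma pat_zero_or_one (j : ℕ) : pat j = 0 ∨ pat j = 1 := by
  unfold pat; split <;> simp

lemma card_filter_range_add (p : ℕ → Prop) [DecidablePred p] (a m : ℕ) :
    ((range (a+m)).filter p).card =
      ((range a).filter p).card + ((range m).filter (fun i => p (a+i))).card := by
  rw [range_add, filter_union, card_union_of_disjoint, filter_map, card_map]
  · rfl
  · apply disjoint_filter_filter
    simp only [Finset.disjoint_left, mem_range, mem_map, addLeftEmbedding_apply]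
    rintro x hx ⟨y, hy, rfl⟩
    omega

lemma periodic_count (p : ℕ → Prop) [DecidablePred p] (hp : ∀ i, p (6+i) ↔ p i) :
    ∀ k r : ℕ, ((range (6*k+r)).filter p).card
      = k * ((range 6).filter p).card + ((range r).filter p).card := by
  intro k
  induction k with
  | zero => simp
  | succ k ih =>
    intro r
    have h6 : 6*(k+1)+r = 6 + (6*k+r) := by ring
    rw [h6, card_filter_range_add]
    have he : (range (6*k+r)).filter (fun i => p (6+i)) = (range (6*k+r)).filter p :=
      filter_congr (fun i _ => by simp [hp i])
    rw [he, ih]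
    ring

lemma fin_filter_card (n : ℕ) (P : ℕ → Prop) [DecidablePred P] :
    ((univ : Finset (Fin n)).filter (fun i => P i.val)).card = ((range n).filter P).card := by
  rw [← Nat.Iio_eq_range, ← Fin.map_valEmbedding_univ, filter_map, card_map]
  rfl

lemma split_last (m : ℕ) (hm : 1 ≤ m) (P : ℕ → Prop) [DecidablePred P] :
    ((range m).filter P).card
      = ((range (m-1)).filter P).card + (if P (m-1) then 1 else 0) := by
  conv_lhs => rw [show m = (m-1)+1 by omega]
  rw [range_add_one, filter_insert]
  split
  · rw [card_insert_of_notMem (by simp)]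
  · rfl

lemma arcCount_eq_fin (n : ℕ) (hn : 3 ≤ n) (f : Fin n → ℤ) (lbl : ℤ) :
    arcCount (cycleArcs n) f lbl
      = ((univ : Finset (Fin n)).filter
          (fun i => f ⟨(i.val+1) % n, Nat.mod_lt _ (by omega)⟩ - f i = lbl)).card := by
  unfold arcCount cycleArcs
  rw [filter_filter]
  refine Finset.card_bij' (fun (p : Fin n × Fin n) _ => p.1)
    (fun (v : Fin n) _ => (v, ⟨(v.val+1) % n, Nat.mod_lt _ (by omega)⟩)) ?_ ?_ ?_ ?_
  · intro p hp
    simp only [mem_filter, mem_univ, true_and] at hp ⊢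
    have he : (⟨(p.1.val+1) % n, Nat.mod_lt _ (by omega)⟩ : Fin n) = p.2 :=
      Fin.ext hp.1.symm
    rw [he]
    exact hp.2
  · intro v hv
    rw [mem_filter] at hv ⊢
    exact ⟨mem_univ _, rfl, hv.2⟩
  · intro p hp
    simp only [mem_filter, mem_univ, true_and] at hp
    exact Prod.ext rfl (Fin.ext hp.1.symm)
  · intro v hv
    rfl

/-- number of arcs with label `lbl` among the first `r` positions, with shift `s` -/
def C (s r : ℕ) (lbl : ℤ) : ℕ := ((range r).filter (fun v => pat (v+1+s) - pat (v+s) = lbl)).card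

/-- wrap-around contribution -/
def W (s c : ℕ) (lbl : ℤ) : ℕ := if pat s - pat c = lbl then 1 else 0

/-- number of ones among the first `r` positions, with shift `s` -/
def O (s r : ℕ) : ℕ := ((range r).filter (fun v => pat (v+s) = 1)).card

lemma arc_formula (n s k r : ℕ) (hn : 3 ≤ n) (h : n - 1 = 6*k + r) (lbl : ℤ) :
    arcCount (cycleArcs n) (fun i : Fin n => pat (i.val + s)) lbl
      = k * C s 6 lbl + C s r lbl + (if pat s - pat (n-1+s) = lbl then 1 else 0) := by
  have h1 : arcCount (cycleArcs n) (fun i : Fin n => pat (i.val + s)) lbl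
      = ((range n).filter (fun v => pat ((v+1)%n + s) - pat (v + s) = lbl)).card := by
    rw [arcCount_eq_fin n hn _ lbl]
    exact fin_filter_card n (fun v => pat ((v+1)%n + s) - pat (v + s) = lbl)
  rw [h1, split_last n (by omega) (fun v => pat ((v+1)%n + s) - pat (v + s) = lbl)]
  have h2 : (range (n-1)).filter (fun v => pat ((v+1)%n + s) - pat (v + s) = lbl)
      = (range (n-1)).filter (fun v => pat (v+1+s) - pat (v+s) = lbl) := by
    apply filter_congr
    intro v hv
    simp only [mem_range] at hv
    have hv1 : (v+1) % n = v+1 := Nat.mod_eq_of_lt (by omega)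
    rw [hv1]
  rw [h2]
  have h3 : ((range (n-1)).filter (fun v => pat (v+1+s) - pat (v+s) = lbl)).card
      = k * C s 6 lbl + C s r lbl := by
    rw [h]
    exact periodic_count _ (fun i => by
      have a : pat (6+i+1+s) = pat (i+1+s) := by
        rw [pat_mod (6+i+1+s), pat_mod (i+1+s)]; congr 1; omega
      have b : pat (6+i+s) = pat (i+s) := by
        rw [pat_mod (6+i+s), pat_mod (i+s)]; congr 1; omega
      rw [a, b]) k r
  rw [h3]
  have h4 : (n-1+1) % n = 0 := by
    rw [show n-1+1 = n by omega, Nat.mod_self]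
  rw [h4, Nat.zero_add]

lemma arc_val (n s k r c : ℕ) (hn : 3 ≤ n) (h : n - 1 = 6*k + r) (hc : (n-1+s) % 6 = c) (lbl : ℤ) :
    arcCount (cycleArcs n) (fun i : Fin n => pat (i.val + s)) lbl
      = k * C s 6 lbl + C s r lbl + W s c lbl := by
  rw [arc_formula n s k r hn h lbl, pat_mod (n-1+s), hc, W]

lemma ones_val (n s k r : ℕ) (h : n = 6*k + r) :
    ((univ : Finset (Fin n)).filter (fun i : Fin n => pat (i.val + s) = 1)).card
      = k * O s 6 + O s r := by
  have h1 : ((univ : Finset (Fin n)).filter (fun i : Fin n => pat (i.val + s) = 1)).card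
      = ((range n).filter (fun v => pat (v+s) = 1)).card := fin_filter_card n (fun v => pat (v+s) = 1)
  rw [h1, h]
  exact periodic_count _ (fun i => by
    have b : pat (6+i+s) = pat (i+s) := by
      rw [pat_mod (6+i+s), pat_mod (i+s)]; congr 1; omega
    rw [b]) k r

lemma zeros_formula (n s : ℕ) :
    ((univ : Finset (Fin n)).filter (fun i : Fin n => pat (i.val + s) = 0)).card
      + ((univ : Finset (Fin n)).filter (fun i : Fin n => pat (i.val + s) = 1)).card = n := by
  have h : ((univ : Finset (Fin n)).filter (fun i : Fin n => pat (i.val + s) = 0))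
      = (univ.filter (fun i : Fin n => ¬ pat (i.val + s) = 1)) :=
    filter_congr (fun i _ => by rcases pat_zero_or_one (i.val+s) with h|h <;> simp [h])
  rw [h, add_comm, card_filter_add_card_filter_not, card_univ, Fintype.card_fin]

theorem directedCycle_cordial (n : ℕ) (hn : 3 ≤ n) : cordial23 (cycleArcs n) := by
  obtain ⟨k, r, hnk, hr6⟩ : ∃ k r, n = 6*k + r ∧ r < 6 := ⟨n/6, n%6, by omega, by omega⟩
  interval_cases r
  · -- r = 0, shift 0
    refine ⟨fun i => pat (i.val + 0), fun v => pat_zero_or_one _, ?_, ?_⟩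
    · have h1 := ones_val n 0 k 0 hnk
      rw [show O 0 6 = 3 from by decide, show O 0 0 = 0 from by decide] at h1
      have hz := zeros_formula n 0
      show |((((univ : Finset (Fin n)).filter (fun v => pat (v.val + 0) = 0)).card : ℤ))
          - ((((univ : Finset (Fin n)).filter (fun v => pat (v.val + 0) = 1)).card : ℤ))| ≤ 1
      rw [abs_le]
      omega
    · have hm := arc_val n 0 (k-1) 5 5 hn (by omega) (by omega) (-1)
      have h0 := arc_val n 0 (k-1) 5 5 hn (by omega) (by omega) 0
      have hp := arc_val n 0 (k-1) 5 5 hn (by omega) (by omega) 1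
      rw [show C 0 6 (-1) = 2 from by decide, show C 0 5 (-1) = 2 from by decide,
          show W 0 5 (-1) = 0 from by decide] at hm
      rw [show C 0 6 0 = 2 from by decide, show C 0 5 0 = 2 from by decide,
          show W 0 5 0 = 0 from by decide] at h0
      rw [show C 0 6 1 = 2 from by decide, show C 0 5 1 = 1 from by decide,
          show W 0 5 1 = 1 from by decide] at hp
      intro i hi j hj
      simp only [Set.mem_insert_iff, Set.mem_singleton_iff] at hi hj
      rcases hi with rfl|rfl|rfl <;> rcases hj with rfl|rfl|rfl <;>
        simp only [hm, h0, hp] <;> rw [abs_le] <;> omega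
  · -- r = 1, shift 0
    refine ⟨fun i => pat (i.val + 0), fun v => pat_zero_or_one _, ?_, ?_⟩
    · have h1 := ones_val n 0 k 1 hnk
      rw [show O 0 6 = 3 from by decide, show O 0 1 = 1 from by decide] at h1
      have hz := zeros_formula n 0
      show |((((univ : Finset (Fin n)).filter (fun v => pat (v.val + 0) = 0)).card : ℤ))
          - ((((univ : Finset (Fin n)).filter (fun v => pat (v.val + 0) = 1)).card : ℤ))| ≤ 1
      rw [abs_le]
      omega
    · have hm := arc_val n 0 k 0 0 hn (by omega) (by omega) (-1)
      have h0 := arc_val n 0 k 0 0 hn (by omega) (by omega) 0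
      have hp := arc_val n 0 k 0 0 hn (by omega) (by omega) 1
      rw [show C 0 6 (-1) = 2 from by decide, show C 0 0 (-1) = 0 from by decide,
          show W 0 0 (-1) = 0 from by decide] at hm
      rw [show C 0 6 0 = 2 from by decide, show C 0 0 0 = 0 from by decide,
          show W 0 0 0 = 1 from by decide] at h0
      rw [show C 0 6 1 = 2 from by decide, show C 0 0 1 = 0 from by decide,
          show W 0 0 1 = 0 from by decide] at hp
      intro i hi j hj
      simp only [Set.mem_insert_iff, Set.mem_singleton_iff] at hi hj
      rcases hi with rfl|rfl|rfl <;> rcases hj with rfl|rfl|rfl <;>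
        simp only [hm, h0, hp] <;> rw [abs_le] <;> omega
  · -- r = 2, shift 1
    refine ⟨fun i => pat (i.val + 1), fun v => pat_zero_or_one _, ?_, ?_⟩
    · have h1 := ones_val n 1 k 2 hnk
      rw [show O 1 6 = 3 from by decide, show O 1 2 = 1 from by decide] at h1
      have hz := zeros_formula n 1
      show |((((univ : Finset (Fin n)).filter (fun v => pat (v.val + 1) = 0)).card : ℤ))
          - ((((univ : Finset (Fin n)).filter (fun v => pat (v.val + 1) = 1)).card : ℤ))| ≤ 1
      rw [abs_le]
      omega
    · have hm := arc_val n 1 k 1 2 hn (by omega) (by omega) (-1)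
      have h0 := arc_val n 1 k 1 2 hn (by omega) (by omega) 0
      have hp := arc_val n 1 k 1 2 hn (by omega) (by omega) 1
      rw [show C 1 6 (-1) = 2 from by decide, show C 1 1 (-1) = 1 from by decide,
          show W 1 2 (-1) = 0 from by decide] at hm
      rw [show C 1 6 0 = 2 from by decide, show C 1 1 0 = 0 from by decide,
          show W 1 2 0 = 0 from by decide] at h0
      rw [show C 1 6 1 = 2 from by decide, show C 1 1 1 = 0 from by decide,
          show W 1 2 1 = 1 from by decide] at hp
      intro i hi j hj
      simp only [Set.mem_insert_iff, Set.mem_singleton_iff] at hi hj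
      rcases hi with rfl|rfl|rfl <;> rcases hj with rfl|rfl|rfl <;>
        simp only [hm, h0, hp] <;> rw [abs_le] <;> omega
  · -- r = 3, shift 0
    refine ⟨fun i => pat (i.val + 0), fun v => pat_zero_or_one _, ?_, ?_⟩
    · have h1 := ones_val n 0 k 3 hnk
      rw [show O 0 6 = 3 from by decide, show O 0 3 = 2 from by decide] at h1
      have hz := zeros_formula n 0
      show |((((univ : Finset (Fin n)).filter (fun v => pat (v.val + 0) = 0)).card : ℤ))
          - ((((univ : Finset (Fin n)).filter (fun v => pat (v.val + 0) = 1)).card : ℤ))| ≤ 1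
      rw [abs_le]
      omega
    · have hm := arc_val n 0 k 2 2 hn (by omega) (by omega) (-1)
      have h0 := arc_val n 0 k 2 2 hn (by omega) (by omega) 0
      have hp := arc_val n 0 k 2 2 hn (by omega) (by omega) 1
      rw [show C 0 6 (-1) = 2 from by decide, show C 0 2 (-1) = 1 from by decide,
          show W 0 2 (-1) = 0 from by decide] at hm
      rw [show C 0 6 0 = 2 from by decide, show C 0 2 0 = 1 from by decide,
          show W 0 2 0 = 0 from by decide] at h0
      rw [show C 0 6 1 = 2 from by decide, show C 0 2 1 = 0 from by decide,
          show W 0 2 1 = 1 from by decide] at hp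
      intro i hi j hj
      simp only [Set.mem_insert_iff, Set.mem_singleton_iff] at hi hj
      rcases hi with rfl|rfl|rfl <;> rcases hj with rfl|rfl|rfl <;>
        simp only [hm, h0, hp] <;> rw [abs_le] <;> omega
  · -- r = 4, shift 3
    refine ⟨fun i => pat (i.val + 3), fun v => pat_zero_or_one _, ?_, ?_⟩
    · have h1 := ones_val n 3 k 4 hnk
      rw [show O 3 6 = 3 from by decide, show O 3 4 = 2 from by decide] at h1
      have hz := zeros_formula n 3
      show |((((univ : Finset (Fin n)).filter (fun v => pat (v.val + 3) = 0)).card : ℤ))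
          - ((((univ : Finset (Fin n)).filter (fun v => pat (v.val + 3) = 1)).card : ℤ))| ≤ 1
      rw [abs_le]
      omega
    · have hm := arc_val n 3 k 3 0 hn (by omega) (by omega) (-1)
      have h0 := arc_val n 3 k 3 0 hn (by omega) (by omega) 0
      have hp := arc_val n 3 k 3 0 hn (by omega) (by omega) 1
      rw [show C 3 6 (-1) = 2 from by decide, show C 3 3 (-1) = 1 from by decide,
          show W 3 0 (-1) = 0 from by decide] at hm
      rw [show C 3 6 0 = 2 from by decide, show C 3 3 0 = 1 from by decide,
          show W 3 0 0 = 1 from by decide] at h0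
      rw [show C 3 6 1 = 2 from by decide, show C 3 3 1 = 1 from by decide,
          show W 3 0 1 = 0 from by decide] at hp
      intro i hi j hj
      simp only [Set.mem_insert_iff, Set.mem_singleton_iff] at hi hj
      rcases hi with rfl|rfl|rfl <;> rcases hj with rfl|rfl|rfl <;>
        simp only [hm, h0, hp] <;> rw [abs_le] <;> omega
  · -- r = 5, shift 0
    refine ⟨fun i => pat (i.val + 0), fun v => pat_zero_or_one _, ?_, ?_⟩
    · have h1 := ones_val n 0 k 5 hnk
      rw [show O 0 6 = 3 from by decide, show O 0 5 = 3 from by decide] at h1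
      have hz := zeros_formula n 0
      show |((((univ : Finset (Fin n)).filter (fun v => pat (v.val + 0) = 0)).card : ℤ))
          - ((((univ : Finset (Fin n)).filter (fun v => pat (v.val + 0) = 1)).card : ℤ))| ≤ 1
      rw [abs_le]
      omega
    · have hm := arc_val n 0 k 4 4 hn (by omega) (by omega) (-1)
      have h0 := arc_val n 0 k 4 4 hn (by omega) (by omega) 0
      have hp := arc_val n 0 k 4 4 hn (by omega) (by omega) 1
      rw [show C 0 6 (-1) = 2 from by decide, show C 0 4 (-1) = 2 from by decide,
          show W 0 4 (-1) = 0 from by decide] at hm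
      rw [show C 0 6 0 = 2 from by decide, show C 0 4 0 = 1 from by decide,
          show W 0 4 0 = 0 from by decide] at h0
      rw [show C 0 6 1 = 2 from by decide, show C 0 4 1 = 1 from by decide,
          show W 0 4 1 = 1 from by decide] at hp
      intro i hi j hj
      simp only [Set.mem_insert_iff, Set.mem_singleton_iff] at hi hj
      rcases hi with rfl|rfl|rfl <;> rcases hj with rfl|rfl|rfl <;>
        simp only [hm, h0, hp] <;> rw [abs_le] <;> omega
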